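/- Let b > 0 and let Ψ, Ψ* : ℝ × ℝ → ℝ be continuous on [−b,b] × [−1,1] with continuous partial derivatives ∂ₓΨ and ∂ₓΨ* on [−b,b] × [−1,1], and assume their inflow traces coincide: Ψ(b,μ) = Ψ*(b,μ) for all μ ∈ [−1,0] and Ψ(−b,μ) = Ψ*(−b,μ) for all μ ∈ [0,1]. Let Σ_t : ℝ → ℝ be continuous on [−b,b] with 0 < σ_* ≤ Σ_t(x) ≤ σ* for all x ∈ [−b,b], and let f : ℝ × ℝ → ℝ be continuous on [−b,b] × [−1,1] with μ ∂ₓΨ*(x,μ) + Σ_t(x)Ψ*(x,μ) = f(x,μ) on [−b,b] × [−1,1]. Then (∫_{−1}^{1} ∫_{−b}^{b} ((Ψ*−Ψ)(x,μ)² + (μ ∂ₓ(Ψ*−Ψ)(x,μ))²) dx dμ)^{1/2} ≤ C_gr (∫_{−1}^{1} ∫_{−b}^{b} (μ ∂ₓΨ(x,μ) + Σ_t(x)Ψ(x,μ) − f(x,μ))² dx dμ)^{1/2}, where C_gr = (σ_*⁻² + (1 + σ*/σ_*)²)^{1/2}. -/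

import Mathlib

open Set MeasureTheory intervalIntegral

/-- Continuity in `x` of a slice of a jointly-continuous function. -/
lemma slice_contOn {b : ℝ} {F : ℝ → ℝ → ℝ}
    (hF : ContinuousOn (fun p : ℝ × ℝ => F p.1 p.2) (Icc (-b) b ×ˢ Icc (-1) 1))
    {μ : ℝ} (hμ : μ ∈ Icc (-1 : ℝ) 1) :
    ContinuousOn (fun x => F x μ) (Icc (-b) b) :=
  hF.comp ((continuous_id.prodMk continuous_const).continuousOn)
    (fun x hx => mk_mem_prod hx hμ)

/-- Continuity in `μ` of a slice. -/
lemma slice_contOn' {b : ℝ} {F : ℝ → ℝ → ℝ}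
    (hF : ContinuousOn (fun p : ℝ × ℝ => F p.1 p.2) (Icc (-b) b ×ˢ Icc (-1) 1))
    {x : ℝ} (hx : x ∈ Icc (-b) b) :
    ContinuousOn (fun μ => F x μ) (Icc (-1 : ℝ) 1) :=
  hF.comp ((continuous_const.prodMk continuous_id).continuousOn)
    (fun μ hμ => mk_mem_prod hx hμ)

/-- Continuity of the parametric interval integral. -/
lemma param_contOn {b : ℝ} (hb : 0 < b) {F : ℝ → ℝ → ℝ}
    (hF : ContinuousOn (fun p : ℝ × ℝ => F p.1 p.2) (Icc (-b) b ×ˢ Icc (-1) 1)) :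
    ContinuousOn (fun μ => ∫ x in (-b)..b, F x μ) (Icc (-1 : ℝ) 1) := by
  have hb' : (-b : ℝ) ≤ b := by linarith
  have hIsub : uIoc (-b) b ⊆ Icc (-b) b := by
    rw [uIoc_of_le hb']
    exact Ioc_subset_Icc_self
  obtain ⟨C, hC⟩ := (isCompact_Icc.prod isCompact_Icc).exists_bound_of_continuousOn hF
  intro μ₀ hμ₀
  apply intervalIntegral.continuousWithinAt_of_dominated_interval
    (bound := fun _ => C) (F := fun μ x => F x μ)
  · filter_upwards [self_mem_nhdsWithin] with μ hμ
    exact ((slice_contOn hF hμ).mono hIsub).aestronglyMeasurable measurableSet_uIoc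
  · filter_upwards [self_mem_nhdsWithin] with μ hμ
    filter_upwards with x hx
    exact hC (x, μ) (mk_mem_prod (hIsub hx) hμ)
  · exact intervalIntegrable_const
  · filter_upwards with x hx
    exact (slice_contOn' hF (hIsub hx)) μ₀ hμ₀

set_option maxHeartbeats 1000000 in
/-- Per-direction energy estimate. -/
lemma permu_estimate {b σstar σsup μ : ℝ} (hb : 0 < b) (hσstar : 0 < σstar)
    (φ φ' r σ : ℝ → ℝ)
    (hφ : ContinuousOn φ (Icc (-b) b)) (hφ' : ContinuousOn φ' (Icc (-b) b))
    (hr : ContinuousOn r (Icc (-b) b)) (hσ : ContinuousOn σ (Icc (-b) b))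
    (hd : ∀ x ∈ Icc (-b) b, HasDerivWithinAt φ (φ' x) (Icc (-b) b) x)
    (hbdry : 0 ≤ μ * (φ b ^ 2 - φ (-b) ^ 2))
    (hpde : ∀ x ∈ Icc (-b) b, μ * φ' x + σ x * φ x + r x = 0)
    (hσb : ∀ x ∈ Icc (-b) b, σstar ≤ σ x ∧ σ x ≤ σsup) :
    ∫ x in (-b)..b, (φ x ^ 2 + (μ * φ' x) ^ 2)
      ≤ (σstar⁻¹ ^ 2 + (1 + σsup / σstar) ^ 2) * ∫ x in (-b)..b, r x ^ 2 := by
  have hb' : (-b : ℝ) ≤ b := by linarith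
  have huIcc : uIcc (-b) b = Icc (-b) b := uIcc_of_le hb'
  -- integrability of everything
  have int_of : ∀ {g : ℝ → ℝ}, ContinuousOn g (Icc (-b) b) →
      IntervalIntegrable g volume (-b) b := by
    intro g hg
    exact (huIcc ▸ hg : ContinuousOn g (uIcc (-b) b)).intervalIntegrable
  have hφ2 : ContinuousOn (fun x => φ x ^ 2) (Icc (-b) b) := hφ.pow 2
  have hφφ' : ContinuousOn (fun x => 2 * (φ x * φ' x)) (Icc (-b) b) :=
    (continuousOn_const.mul (hφ.mul hφ'))
  have hr2 : ContinuousOn (fun x => r x ^ 2) (Icc (-b) b) := hr.pow 2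
  -- FTC : ∫ 2 φ φ' = φ(b)^2 - φ(-b)^2
  have hFTC : ∫ x in (-b)..b, 2 * (φ x * φ' x) = φ b ^ 2 - φ (-b) ^ 2 := by
    have := integral_eq_sub_of_hasDeriv_right_of_le
      (f := fun x => φ x ^ 2) (f' := fun x => 2 * (φ x * φ' x)) hb' hφ2
      (fun x hx => ?_) (int_of hφφ')
    · exact this
    · have hmem : Icc (-b) b ∈ nhds x := Icc_mem_nhds hx.1 hx.2
      have h1 : HasDerivAt φ (φ' x) x :=
        (hd x (Ioo_subset_Icc_self hx)).hasDerivAt hmem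
      have h2 : HasDerivAt (fun x => φ x ^ 2) (2 * (φ x * φ' x)) x := by
        have : HasDerivAt (fun x => φ x ^ 2) (((2:ℕ):ℝ) * φ x ^ 1 * φ' x) x := h1.fun_pow 2
        convert this using 1
        ring
      exact h2.hasDerivWithinAt
  -- basic quantities
  set t : ℝ := σsup / σstar with ht_def
  have h0mem : (0:ℝ) ∈ Icc (-b) b := ⟨by linarith, by linarith⟩
  have hσsup : σstar ≤ σsup := le_trans (hσb 0 h0mem).1 (hσb 0 h0mem).2
  have ht1 : 1 ≤ t := (one_le_div hσstar).2 hσsup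
  have ht : 0 < t := lt_of_lt_of_le one_pos ht1
  have hts : σsup = t * σstar := by rw [ht_def]; field_simp
  -- integrabilities
  have iφ2 := int_of hφ2
  have ir2 := int_of hr2
  have iφφ' : IntervalIntegrable (fun x => φ x * φ' x) volume (-b) b :=
    int_of (hφ.mul hφ')
  have iσφ2 : IntervalIntegrable (fun x => σ x * φ x ^ 2) volume (-b) b :=
    int_of (hσ.mul hφ2)
  have irφ : IntervalIntegrable (fun x => r x * φ x) volume (-b) b :=
    int_of (hr.mul hφ)
  have iμφ'2 : IntervalIntegrable (fun x => (μ * φ' x) ^ 2) volume (-b) b :=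
    int_of ((continuousOn_const.mul hφ').pow 2)
  -- energy identity
  have hE : ∫ x in (-b)..b, (μ * (φ x * φ' x) + (σ x * φ x ^ 2 + r x * φ x)) = 0 := by
    rw [show (0:ℝ) = ∫ x in (-b)..b, (0:ℝ) by simp]
    apply intervalIntegral.integral_congr
    intro x hx
    rw [huIcc] at hx
    have := hpde x hx
    simp only []
    linear_combination (φ x) * this
  have hEsplit : μ * (∫ x in (-b)..b, φ x * φ' x)
      + ((∫ x in (-b)..b, σ x * φ x ^ 2) + ∫ x in (-b)..b, r x * φ x) = 0 := by
    rw [← intervalIntegral.integral_const_mul, ← intervalIntegral.integral_add iσφ2 irφ,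
      ← intervalIntegral.integral_add (iφφ'.const_mul μ) (iσφ2.add irφ)]
    exact hE
  -- boundary sign
  have hI2 : 0 ≤ μ * ∫ x in (-b)..b, φ x * φ' x := by
    have h2 : ∫ x in (-b)..b, 2 * (φ x * φ' x) = 2 * ∫ x in (-b)..b, φ x * φ' x :=
      intervalIntegral.integral_const_mul 2 _
    rw [h2] at hFTC
    have hb2 := hbdry
    rw [← hFTC] at hb2
    linarith
  -- σstar * I1 ≤ I3
  have hc : σstar * (∫ x in (-b)..b, φ x ^ 2) ≤ ∫ x in (-b)..b, σ x * φ x ^ 2 := by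
    rw [← intervalIntegral.integral_const_mul]
    apply intervalIntegral.integral_mono_on hb' (iφ2.const_mul σstar) iσφ2
    intro x hx
    have := (hσb x hx).1
    nlinarith [sq_nonneg (φ x)]
  -- -I4 ≤ I5/(2σstar) + (σstar/2) I1
  have hd4 : -(∫ x in (-b)..b, r x * φ x)
      ≤ (1 / (2 * σstar)) * (∫ x in (-b)..b, r x ^ 2)
        + (σstar / 2) * ∫ x in (-b)..b, φ x ^ 2 := by
    rw [← intervalIntegral.integral_neg, ← intervalIntegral.integral_const_mul,
      ← intervalIntegral.integral_const_mul,
      ← intervalIntegral.integral_add (ir2.const_mul _) (iφ2.const_mul _)]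
    apply intervalIntegral.integral_mono_on hb' irφ.neg
      ((ir2.const_mul _).add (iφ2.const_mul _))
    intro x hx
    have h := sq_nonneg (r x + σstar * φ x)
    have key : 1/(2*σstar) * (r x + σstar * φ x)^2
        = 1/(2*σstar) * r x ^ 2 + r x * φ x + σstar/2 * φ x ^ 2 := by
      field_simp
      ring
    have hnn : 0 ≤ 1/(2*σstar) := by positivity
    simp only [Pi.neg_apply]
    nlinarith [mul_nonneg hnn h]
  -- I5 ≥ 0, I1 ≥ 0
  have hI5nn : 0 ≤ ∫ x in (-b)..b, r x ^ 2 :=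
    intervalIntegral.integral_nonneg hb' (fun x _ => sq_nonneg _)
  -- I1 ≤ σstar⁻¹^2 * I5
  have h1 : (∫ x in (-b)..b, φ x ^ 2) ≤ σstar⁻¹ ^ 2 * ∫ x in (-b)..b, r x ^ 2 := by
    have hfrom : σstar * (∫ x in (-b)..b, φ x ^ 2)
        ≤ (1 / (2 * σstar)) * (∫ x in (-b)..b, r x ^ 2)
          + (σstar / 2) * ∫ x in (-b)..b, φ x ^ 2 := by
      calc σstar * (∫ x in (-b)..b, φ x ^ 2)
          ≤ ∫ x in (-b)..b, σ x * φ x ^ 2 := hc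
        _ ≤ -(∫ x in (-b)..b, r x * φ x) := by linarith [hEsplit, hI2]
        _ ≤ _ := hd4
    have heq2 : σstar⁻¹ ^ 2 * (∫ x in (-b)..b, r x ^ 2)
        = (σstar / 2)⁻¹ * ((1 / (2 * σstar)) * ∫ x in (-b)..b, r x ^ 2) := by
      field_simp
    rw [heq2]
    have h2 : 0 < σstar / 2 := by linarith
    rw [inv_mul_eq_div, le_div_iff₀ h2]
    linarith
  -- I6 ≤ (1+t) I5 + (1+1/t) σsup² I1
  have h6 : (∫ x in (-b)..b, (μ * φ' x) ^ 2)
      ≤ (1 + t) * (∫ x in (-b)..b, r x ^ 2)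
        + ((1 + 1/t) * σsup ^ 2) * ∫ x in (-b)..b, φ x ^ 2 := by
    rw [← intervalIntegral.integral_const_mul, ← intervalIntegral.integral_const_mul,
      ← intervalIntegral.integral_add (ir2.const_mul _) (iφ2.const_mul _)]
    apply intervalIntegral.integral_mono_on hb' iμφ'2
      ((ir2.const_mul _).add (iφ2.const_mul _))
    intro x hx
    have hp := hpde x hx
    have hμφ' : μ * φ' x = -(σ x * φ x + r x) := by linarith
    have hnn1t : (0:ℝ) ≤ 1 + 1/t := by positivity
    have hσ1 := (hσb x hx).1
    have hσ2 := (hσb x hx).2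
    rw [hμφ']
    have step1 : (σ x * φ x + r x) ^ 2
        ≤ (1 + t) * r x ^ 2 + (1 + 1/t) * (σ x * φ x) ^ 2 := by
      have hdiv : 1/t * (t * r x - σ x * φ x)^2
          = t * r x ^ 2 - 2 * (r x * (σ x * φ x)) + 1/t * (σ x * φ x)^2 := by
        field_simp
        ring
      nlinarith [hdiv, mul_nonneg (le_of_lt (by positivity : (0:ℝ) < 1/t))
        (sq_nonneg (t * r x - σ x * φ x))]
    have step2 : (σ x * φ x) ^ 2 ≤ σsup ^ 2 * φ x ^ 2 := by
      nlinarith [sq_nonneg (φ x), mul_nonneg (by linarith : (0:ℝ) ≤ σsup - σ x)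
        (by linarith : (0:ℝ) ≤ σsup + σ x)]
    calc (-(σ x * φ x + r x)) ^ 2 = (σ x * φ x + r x) ^ 2 := by ring
      _ ≤ (1 + t) * r x ^ 2 + (1 + 1/t) * (σ x * φ x) ^ 2 := step1
      _ ≤ (1 + t) * r x ^ 2 + (1 + 1/t) * (σsup ^ 2 * φ x ^ 2) := by
            have := mul_le_mul_of_nonneg_left step2 hnn1t
            linarith
      _ = (1 + t) * r x ^ 2 + (1 + 1/t) * σsup ^ 2 * φ x ^ 2 := by ring
  -- combine
  have hcoef : (1 + 1/t) * σsup ^ 2 * σstar⁻¹ ^ 2 = t ^ 2 + t := by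
    rw [hts]
    field_simp
  have hsplit : ∫ x in (-b)..b, (φ x ^ 2 + (μ * φ' x) ^ 2)
      = (∫ x in (-b)..b, φ x ^ 2) + ∫ x in (-b)..b, (μ * φ' x) ^ 2 :=
    intervalIntegral.integral_add iφ2 iμφ'2
  have hchain : ((1 + 1/t) * σsup ^ 2) * (∫ x in (-b)..b, φ x ^ 2)
      ≤ (t ^ 2 + t) * ∫ x in (-b)..b, r x ^ 2 := by
    have := mul_le_mul_of_nonneg_left h1 (by positivity : (0:ℝ) ≤ (1 + 1/t) * σsup ^ 2)
    calc ((1 + 1/t) * σsup ^ 2) * (∫ x in (-b)..b, φ x ^ 2)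
        ≤ ((1 + 1/t) * σsup ^ 2) * (σstar⁻¹ ^ 2 * ∫ x in (-b)..b, r x ^ 2) := this
      _ = ((1 + 1/t) * σsup ^ 2 * σstar⁻¹ ^ 2) * ∫ x in (-b)..b, r x ^ 2 := by ring
      _ = (t ^ 2 + t) * ∫ x in (-b)..b, r x ^ 2 := by rw [hcoef]
  rw [hsplit]
  have hfinal : σstar⁻¹ ^ 2 + (1 + σsup / σstar) ^ 2 = σstar⁻¹ ^ 2 + (1 + t) ^ 2 := by
    rw [ht_def]
  rw [hfinal]
  nlinarith [h1, h6, hchain, hI5nn]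

/-- Residual-based a posteriori error bound in 1D slab geometry: if `Ψ*`
solves `𝒟Ψ* = f` and `Ψ` matches the inflow data of `Ψ*`, then the graph-norm
error of `Ψ` is controlled by the `L²` residual of `Ψ`. -/
theorem transport_residual_error_bound
    (b : ℝ) (hb : 0 < b) (Ψ Ψx Ψs Ψsx f : ℝ → ℝ → ℝ) (sigmaT : ℝ → ℝ)
    (σstar σsup : ℝ)
    (hΨ : ContinuousOn (fun p : ℝ × ℝ => Ψ p.1 p.2) (Icc (-b) b ×ˢ Icc (-1) 1))
    (hΨs : ContinuousOn (fun p : ℝ × ℝ => Ψs p.1 p.2) (Icc (-b) b ×ˢ Icc (-1) 1))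
    (hΨx : ContinuousOn (fun p : ℝ × ℝ => Ψx p.1 p.2) (Icc (-b) b ×ˢ Icc (-1) 1))
    (hΨsx : ContinuousOn (fun p : ℝ × ℝ => Ψsx p.1 p.2) (Icc (-b) b ×ˢ Icc (-1) 1))
    (hderiv : ∀ μ ∈ Icc (-1 : ℝ) 1, ∀ x ∈ Icc (-b) b,
      HasDerivWithinAt (fun t => Ψ t μ) (Ψx x μ) (Icc (-b) b) x)
    (hderivs : ∀ μ ∈ Icc (-1 : ℝ) 1, ∀ x ∈ Icc (-b) b,
      HasDerivWithinAt (fun t => Ψs t μ) (Ψsx x μ) (Icc (-b) b) x)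
    (hin₁ : ∀ μ ∈ Icc (-1 : ℝ) 0, Ψ b μ = Ψs b μ)
    (hin₂ : ∀ μ ∈ Icc (0 : ℝ) 1, Ψ (-b) μ = Ψs (-b) μ)
    (hsigmaT : ContinuousOn sigmaT (Icc (-b) b))
    (hσstar : 0 < σstar)
    (hbound : ∀ x ∈ Icc (-b) b, σstar ≤ sigmaT x ∧ sigmaT x ≤ σsup)
    (hf : ContinuousOn (fun p : ℝ × ℝ => f p.1 p.2) (Icc (-b) b ×ˢ Icc (-1) 1))
    (heq : ∀ μ ∈ Icc (-1 : ℝ) 1, ∀ x ∈ Icc (-b) b,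
      μ * Ψsx x μ + sigmaT x * Ψs x μ = f x μ) :
    Real.sqrt (∫ μ in (-1 : ℝ)..1, ∫ x in (-b)..b,
        ((Ψs x μ - Ψ x μ) ^ 2 + (μ * (Ψsx x μ - Ψx x μ)) ^ 2))
      ≤ Real.sqrt (σstar⁻¹ ^ 2 + (1 + σsup / σstar) ^ 2)
        * Real.sqrt (∫ μ in (-1 : ℝ)..1, ∫ x in (-b)..b,
            (μ * Ψx x μ + sigmaT x * Ψ x μ - f x μ) ^ 2) := by
  have hb1 : ((-1:ℝ)) ≤ 1 := by norm_num
  have huIcc1 : uIcc (-1:ℝ) 1 = Icc (-1:ℝ) 1 := uIcc_of_le hb1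
  set A : ℝ := σstar⁻¹ ^ 2 + (1 + σsup / σstar) ^ 2 with hA_def
  have hA : 0 ≤ A := by positivity
  -- jointly continuous integrands
  have hFG : ContinuousOn (fun p : ℝ × ℝ =>
      ((Ψs p.1 p.2 - Ψ p.1 p.2) ^ 2 + (p.2 * (Ψsx p.1 p.2 - Ψx p.1 p.2)) ^ 2))
      (Icc (-b) b ×ˢ Icc (-1) 1) :=
    ((hΨs.sub hΨ).pow 2).add ((continuous_snd.continuousOn.mul (hΨsx.sub hΨx)).pow 2)
  have hFH : ContinuousOn (fun p : ℝ × ℝ =>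
      (p.2 * Ψx p.1 p.2 + sigmaT p.1 * Ψ p.1 p.2 - f p.1 p.2) ^ 2)
      (Icc (-b) b ×ˢ Icc (-1) 1) :=
    (((continuous_snd.continuousOn.mul hΨx).add
      ((hsigmaT.comp continuous_fst.continuousOn (fun p hp => hp.1)).mul hΨ)).sub hf).pow 2
  -- integrability of the outer integrands
  have hGcont : ContinuousOn (fun μ => ∫ x in (-b)..b,
      ((Ψs x μ - Ψ x μ) ^ 2 + (μ * (Ψsx x μ - Ψx x μ)) ^ 2)) (Icc (-1:ℝ) 1) :=
    param_contOn hb (F := fun x μ => ((Ψs x μ - Ψ x μ) ^ 2 + (μ * (Ψsx x μ - Ψx x μ)) ^ 2)) hFG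
  have hHcont : ContinuousOn (fun μ => ∫ x in (-b)..b,
      (μ * Ψx x μ + sigmaT x * Ψ x μ - f x μ) ^ 2) (Icc (-1:ℝ) 1) :=
    param_contOn hb (F := fun x μ => (μ * Ψx x μ + sigmaT x * Ψ x μ - f x μ) ^ 2) hFH
  have hGint : IntervalIntegrable (fun μ => ∫ x in (-b)..b,
      ((Ψs x μ - Ψ x μ) ^ 2 + (μ * (Ψsx x μ - Ψx x μ)) ^ 2)) volume (-1) 1 :=
    (huIcc1 ▸ hGcont : ContinuousOn _ (uIcc (-1:ℝ) 1)).intervalIntegrable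
  have hHint : IntervalIntegrable (fun μ => ∫ x in (-b)..b,
      (μ * Ψx x μ + sigmaT x * Ψ x μ - f x μ) ^ 2) volume (-1) 1 :=
    (huIcc1 ▸ hHcont : ContinuousOn _ (uIcc (-1:ℝ) 1)).intervalIntegrable
  -- per-direction estimate
  have hper : ∀ μ ∈ Icc (-1:ℝ) 1,
      (∫ x in (-b)..b, ((Ψs x μ - Ψ x μ) ^ 2 + (μ * (Ψsx x μ - Ψx x μ)) ^ 2))
        ≤ A * ∫ x in (-b)..b, (μ * Ψx x μ + sigmaT x * Ψ x μ - f x μ) ^ 2 := by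
    intro μ hμ
    have hbdry : 0 ≤ μ * ((Ψs b μ - Ψ b μ) ^ 2 - (Ψs (-b) μ - Ψ (-b) μ) ^ 2) := by
      rcases le_or_gt μ 0 with hμ0 | hμ0
      · have h0 : Ψ b μ = Ψs b μ := hin₁ μ ⟨hμ.1, hμ0⟩
        have : Ψs b μ - Ψ b μ = 0 := by rw [h0]; ring
        rw [this]
        nlinarith [sq_nonneg (Ψs (-b) μ - Ψ (-b) μ)]
      · have h0 : Ψ (-b) μ = Ψs (-b) μ := hin₂ μ ⟨le_of_lt hμ0, hμ.2⟩
        have : Ψs (-b) μ - Ψ (-b) μ = 0 := by rw [h0]; ring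
        rw [this]
        nlinarith [sq_nonneg (Ψs b μ - Ψ b μ)]
    exact permu_estimate hb hσstar
      (fun x => Ψs x μ - Ψ x μ) (fun x => Ψsx x μ - Ψx x μ)
      (fun x => μ * Ψx x μ + sigmaT x * Ψ x μ - f x μ) sigmaT
      ((slice_contOn hΨs hμ).sub (slice_contOn hΨ hμ))
      ((slice_contOn hΨsx hμ).sub (slice_contOn hΨx hμ))
      (((continuousOn_const.mul (slice_contOn hΨx hμ)).add
        (hsigmaT.mul (slice_contOn hΨ hμ))).sub (slice_contOn hf hμ))
      hsigmaT
      (fun x hx => (hderivs μ hμ x hx).sub (hderiv μ hμ x hx))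
      hbdry
      (fun x hx => by linear_combination heq μ hμ x hx)
      hbound
  -- integrate over μ
  have houter : (∫ μ in (-1:ℝ)..1, ∫ x in (-b)..b,
      ((Ψs x μ - Ψ x μ) ^ 2 + (μ * (Ψsx x μ - Ψx x μ)) ^ 2))
      ≤ A * ∫ μ in (-1:ℝ)..1, ∫ x in (-b)..b,
        (μ * Ψx x μ + sigmaT x * Ψ x μ - f x μ) ^ 2 := by
    rw [← intervalIntegral.integral_const_mul]
    exact intervalIntegral.integral_mono_on hb1 hGint (hHint.const_mul A) hper
  calc Real.sqrt (∫ μ in (-1:ℝ)..1, ∫ x in (-b)..b,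
        ((Ψs x μ - Ψ x μ) ^ 2 + (μ * (Ψsx x μ - Ψx x μ)) ^ 2))
      ≤ Real.sqrt (A * ∫ μ in (-1:ℝ)..1, ∫ x in (-b)..b,
          (μ * Ψx x μ + sigmaT x * Ψ x μ - f x μ) ^ 2) := Real.sqrt_le_sqrt houter
    _ = Real.sqrt A * Real.sqrt (∫ μ in (-1:ℝ)..1, ∫ x in (-b)..b,
          (μ * Ψx x μ + sigmaT x * Ψ x μ - f x μ) ^ 2) := Real.sqrt_mul hA _
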